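/- (Error bound for federated policy improvement without federated policy evaluation.) Suppose each client n computes a local value estimate V^t_n with ‖V^t_n − V^{π^t}_n‖_∞ ≤ δ_n and a local policy π^{t+1}_n with ‖T^{π^{t+1}_n}_n V^t_n − T_n V^t_n‖_∞ ≤ ε_n, all value functions and estimates bounded by R_max/(1−γ); let V̄^t = ∑_n q_n V^t_n and π^{t+1} = ∑_n q_n π^{t+1}_n. Then ‖T^{π^{t+1}}_I V̄^t − T_I V̄^t‖_∞ ≤ 2γ² R_max κ_2/(1−γ)² + γ R_max κ_1/(1−γ) + 4γ δ̄ + ε̄, where κ_1 = ∑_n q_n κ_{n,I}, κ_2 = ∑_{i,j} q_i q_j κ_{i,j}, δ̄ = ∑_n q_n δ_n, ε̄ = ∑_n q_n ε_n. -/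

import Mathlib

open Finset Filter

variable {S A : Type*}

/-- A stochastic policy: for each state, a probability distribution over actions. -/
def IsPolicy [Fintype A] (pi : S → A → ℝ) : Prop :=
  (∀ s a, 0 ≤ pi s a) ∧ ∀ s, ∑ a, pi s a = 1

/-- A transition kernel: for each state-action pair, a probability distribution over states. -/
def IsKernel [Fintype S] (P : S → A → S → ℝ) : Prop :=
  (∀ s a s', 0 ≤ P s a s') ∧ ∀ s a, ∑ s', P s a s' = 1

/-- The policy Bellman operator `T^π` for kernel `P`. -/
def Tpol [Fintype S] [Fintype A] (γ : ℝ) (R : S → A → ℝ) (P : S → A → S → ℝ)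
    (pi : S → A → ℝ) (V : S → ℝ) (s : S) : ℝ :=
  ∑ a, pi s a * (R s a + γ * ∑ s', P s a s' * V s')

/-- The Bellman optimality operator `T` for kernel `P`. -/
noncomputable def Topt [Fintype S] [Fintype A] [Nonempty A] (γ : ℝ) (R : S → A → ℝ)
    (P : S → A → S → ℝ) (V : S → ℝ) (s : S) : ℝ :=
  Finset.univ.sup' Finset.univ_nonempty fun a => R s a + γ * ∑ s', P s a s' * V s'

/-- Heterogeneity measure `κ_{m,n}`: the supremum over policies `π` and states `s` of the
ℓ¹-distance between the induced state transition kernels `P_m^π(·|s)` and `P_n^π(·|s)`. -/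
noncomputable def kappa [Fintype S] [Fintype A] (Pm Pn : S → A → S → ℝ) : ℝ :=
  sSup {x : ℝ | ∃ pi : S → A → ℝ, ∃ s : S, IsPolicy pi ∧
    x = ∑ s', |(∑ a, pi s a * Pm s a s') - ∑ a, pi s a * Pn s a s'|}

/-- Sup-norm of a value function on a finite state space. -/
noncomputable def supNorm [Fintype S] [Nonempty S] (V : S → ℝ) : ℝ := ⨆ s, |V s|

variable [Fintype S] [Fintype A] [Nonempty S] [Nonempty A]

set_option linter.unusedSectionVars false

lemma supNorm_le {V : S → ℝ} {c : ℝ} (h : ∀ s, |V s| ≤ c) : supNorm V ≤ c :=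
  ciSup_le h

lemma abs_le_supNorm (V : S → ℝ) (s : S) : |V s| ≤ supNorm V :=
  le_ciSup (Set.Finite.bddAbove (Set.finite_range fun s => |V s|)) s

lemma supNorm_nonneg (V : S → ℝ) : 0 ≤ supNorm V := by
  obtain ⟨s⟩ := (inferInstance : Nonempty S)
  exact le_trans (abs_nonneg _) (abs_le_supNorm V s)

lemma kappa_bddAbove {Pm Pn : S → A → S → ℝ} (hm : IsKernel Pm) (hn : IsKernel Pn) :
    ∀ x ∈ {x : ℝ | ∃ pi : S → A → ℝ, ∃ s : S, IsPolicy pi ∧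
      x = ∑ s', |(∑ a, pi s a * Pm s a s') - ∑ a, pi s a * Pn s a s'|}, x ≤ 2 := by
  rintro x ⟨pi, s, hpi, rfl⟩
  have h1 : ∀ s', |(∑ a, pi s a * Pm s a s') - ∑ a, pi s a * Pn s a s'|
      ≤ (∑ a, pi s a * Pm s a s') + ∑ a, pi s a * Pn s a s' := by
    intro s'
    have h2 : 0 ≤ ∑ a, pi s a * Pm s a s' :=
      Finset.sum_nonneg fun a _ => mul_nonneg (hpi.1 s a) (hm.1 s a s')
    have h3 : 0 ≤ ∑ a, pi s a * Pn s a s' :=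
      Finset.sum_nonneg fun a _ => mul_nonneg (hpi.1 s a) (hn.1 s a s')
    calc |(∑ a, pi s a * Pm s a s') - ∑ a, pi s a * Pn s a s'|
        ≤ |∑ a, pi s a * Pm s a s'| + |∑ a, pi s a * Pn s a s'| := abs_sub _ _
      _ = _ := by rw [abs_of_nonneg h2, abs_of_nonneg h3]
  calc (∑ s', |(∑ a, pi s a * Pm s a s') - ∑ a, pi s a * Pn s a s'|)
      ≤ ∑ s' : S, ((∑ a, pi s a * Pm s a s') + ∑ a, pi s a * Pn s a s') :=
        Finset.sum_le_sum fun s' _ => h1 s'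
    _ = 2 := by
        have t : ∀ Q : S → A → S → ℝ, IsKernel Q →
            (∑ s' : S, ∑ a, pi s a * Q s a s') = 1 := by
          intro Q hQ
          rw [Finset.sum_comm]
          have e1 : ∀ a : A, (∑ s', pi s a * Q s a s') = pi s a := by
            intro a; rw [← Finset.mul_sum, hQ.2, mul_one]
          simp only [e1, hpi.2]
        rw [Finset.sum_add_distrib, t Pm hm, t Pn hn]
        norm_num

lemma le_kappa {Pm Pn : S → A → S → ℝ} (hm : IsKernel Pm) (hn : IsKernel Pn)
    {pi : S → A → ℝ} (hpi : IsPolicy pi) (s : S) :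
    (∑ s', |(∑ a, pi s a * Pm s a s') - ∑ a, pi s a * Pn s a s'|) ≤ kappa Pm Pn :=
  le_csSup ⟨2, fun x hx => kappa_bddAbove hm hn x hx⟩ ⟨pi, s, hpi, rfl⟩

omit [Nonempty S] [Nonempty A] in
lemma kappa_comm (Pm Pn : S → A → S → ℝ) : kappa Pm Pn = kappa Pn Pm := by
  unfold kappa
  congr 1
  ext x
  constructor <;> rintro ⟨pi, s, hpi, rfl⟩ <;> exact ⟨pi, s, hpi, by simp [abs_sub_comm]⟩


/-- Kernel-change bound for the policy Bellman operator, in absolute value. -/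
lemma tpol_kernel_abs {Pm Pn : S → A → S → ℝ} (hm : IsKernel Pm) (hn : IsKernel Pn)
    (hγ : 0 ≤ γ) {pi : S → A → ℝ} (hpi : IsPolicy pi) (R : S → A → ℝ) (V : S → ℝ) (s : S) :
    |Tpol γ R Pm pi V s - Tpol γ R Pn pi V s| ≤ γ * kappa Pm Pn * supNorm V := by
  have key : Tpol γ R Pm pi V s - Tpol γ R Pn pi V s
      = γ * ∑ s', ((∑ a, pi s a * Pm s a s') - ∑ a, pi s a * Pn s a s') * V s' := by
    unfold Tpol
    rw [← Finset.sum_sub_distrib]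
    have per_a : ∀ a : A, pi s a * (R s a + γ * ∑ s', Pm s a s' * V s')
        - pi s a * (R s a + γ * ∑ s', Pn s a s' * V s')
        = ∑ s', γ * ((pi s a * Pm s a s' - pi s a * Pn s a s') * V s') := by
      intro a
      rw [show pi s a * (R s a + γ * ∑ s', Pm s a s' * V s')
          - pi s a * (R s a + γ * ∑ s', Pn s a s' * V s')
          = γ * ((∑ s', pi s a * (Pm s a s' * V s'))
            - ∑ s', pi s a * (Pn s a s' * V s')) from by
        rw [← Finset.mul_sum, ← Finset.mul_sum]; ring]
      rw [← Finset.sum_sub_distrib, Finset.mul_sum]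
      congr 1; ext s'; ring
    simp only [per_a]
    rw [Finset.sum_comm, Finset.mul_sum]
    congr 1; ext s'
    rw [← Finset.mul_sum, ← Finset.sum_mul, Finset.sum_sub_distrib]
  rw [key, abs_mul, abs_of_nonneg hγ, mul_assoc]
  gcongr
  calc |∑ s', ((∑ a, pi s a * Pm s a s') - ∑ a, pi s a * Pn s a s') * V s'|
      ≤ ∑ s', |((∑ a, pi s a * Pm s a s') - ∑ a, pi s a * Pn s a s') * V s'| :=
        Finset.abs_sum_le_sum_abs _ _
    _ ≤ ∑ s', |(∑ a, pi s a * Pm s a s') - ∑ a, pi s a * Pn s a s'| * supNorm V := by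
        refine Finset.sum_le_sum fun s' _ => ?_
        rw [abs_mul]
        exact mul_le_mul_of_nonneg_left (by exact abs_le_supNorm V s') (abs_nonneg _)
    _ = (∑ s', |(∑ a, pi s a * Pm s a s') - ∑ a, pi s a * Pn s a s'|) * supNorm V := by
        rw [Finset.sum_mul]
    _ ≤ kappa Pm Pn * supNorm V :=
        mul_le_mul_of_nonneg_right (le_kappa hm hn hpi s) (supNorm_nonneg V)

/-- Lipschitz property of the policy Bellman operator in the value argument. -/
lemma tpol_lipschitz {P : S → A → S → ℝ} (hP : IsKernel P) (hγ : 0 ≤ γ)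
    {pi : S → A → ℝ} (hpi : IsPolicy pi) (R : S → A → ℝ) (V W : S → ℝ) (s : S) :
    |Tpol γ R P pi V s - Tpol γ R P pi W s| ≤ γ * supNorm (fun s => V s - W s) := by
  have key : Tpol γ R P pi V s - Tpol γ R P pi W s
      = ∑ a, pi s a * (γ * ∑ s', P s a s' * (V s' - W s')) := by
    unfold Tpol
    rw [← Finset.sum_sub_distrib]
    congr 1; ext a
    rw [Finset.mul_sum]
    simp only [mul_sub, Finset.sum_sub_distrib, ← Finset.mul_sum]
    ring
  rw [key]
  calc |∑ a, pi s a * (γ * ∑ s', P s a s' * (V s' - W s'))|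
      ≤ ∑ a, |pi s a * (γ * ∑ s', P s a s' * (V s' - W s'))| := Finset.abs_sum_le_sum_abs _ _
    _ ≤ ∑ a, pi s a * (γ * supNorm (fun s => V s - W s)) := by
        refine Finset.sum_le_sum fun a _ => ?_
        rw [abs_mul, abs_of_nonneg (hpi.1 s a), abs_mul, abs_of_nonneg hγ]
        refine mul_le_mul_of_nonneg_left (mul_le_mul_of_nonneg_left ?_ hγ) (hpi.1 s a)
        calc |∑ s', P s a s' * (V s' - W s')|
            ≤ ∑ s', |P s a s' * (V s' - W s')| := Finset.abs_sum_le_sum_abs _ _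
          _ ≤ ∑ s', P s a s' * supNorm (fun s => V s - W s) := by
              refine Finset.sum_le_sum fun s' _ => ?_
              rw [abs_mul, abs_of_nonneg (hP.1 s a s')]
              exact mul_le_mul_of_nonneg_left
                (by exact abs_le_supNorm (fun s => V s - W s) s') (hP.1 s a s')
          _ = supNorm (fun s => V s - W s) := by rw [← Finset.sum_mul, hP.2, one_mul]
    _ = γ * supNorm (fun s => V s - W s) := by
        rw [← Finset.sum_mul, hpi.2, one_mul]

/-- The policy operator is dominated by the optimality operator. -/
lemma tpol_le_topt {pi : S → A → ℝ} (hpi : IsPolicy pi) (γ : ℝ) (R : S → A → ℝ)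
    (P : S → A → S → ℝ) (V : S → ℝ) (s : S) :
    Tpol γ R P pi V s ≤ Topt γ R P V s := by
  unfold Tpol Topt
  calc (∑ a, pi s a * (R s a + γ * ∑ s', P s a s' * V s'))
      ≤ ∑ a, pi s a * (Finset.univ.sup' Finset.univ_nonempty
          fun a => R s a + γ * ∑ s', P s a s' * V s') := by
        refine Finset.sum_le_sum fun a _ => mul_le_mul_of_nonneg_left ?_ (hpi.1 s a)
        exact Finset.le_sup' (fun a => R s a + γ * ∑ s', P s a s' * V s') (Finset.mem_univ a)
    _ = _ := by rw [← Finset.sum_mul, hpi.2, one_mul]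

/-- Lipschitz property of the optimality operator. -/
lemma topt_lipschitz {P : S → A → S → ℝ} (hP : IsKernel P) (hγ : 0 ≤ γ)
    (R : S → A → ℝ) (V W : S → ℝ) (s : S) :
    Topt γ R P V s - Topt γ R P W s ≤ γ * supNorm (fun s => V s - W s) := by
  rw [sub_le_iff_le_add]
  unfold Topt
  refine Finset.sup'_le _ _ fun a _ => ?_
  have h1 : R s a + γ * ∑ s', P s a s' * V s'
      ≤ (R s a + γ * ∑ s', P s a s' * W s') + γ * supNorm (fun s => V s - W s) := by
    have h2 : (∑ s', P s a s' * V s') - (∑ s', P s a s' * W s')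
        ≤ supNorm (fun s => V s - W s) := by
      rw [← Finset.sum_sub_distrib]
      calc (∑ s', (P s a s' * V s' - P s a s' * W s'))
          = ∑ s', P s a s' * (V s' - W s') := by congr 1; ext s'; ring
        _ ≤ ∑ s', P s a s' * supNorm (fun s => V s - W s) := by
            refine Finset.sum_le_sum fun s' _ => ?_
            exact mul_le_mul_of_nonneg_left
              (le_trans (le_abs_self _)
                (by exact abs_le_supNorm (fun s => V s - W s) s')) (hP.1 s a s')
        _ = _ := by rw [← Finset.sum_mul, hP.2, one_mul]
    nlinarith [h2]
  refine le_trans h1 ?_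
  rw [add_comm]
  exact add_le_add_right
    (Finset.le_sup' (fun a => R s a + γ * ∑ s', P s a s' * W s') (Finset.mem_univ a)) _

/-- Boundedness of the policy operator output. -/
lemma tpol_abs_le {P : S → A → S → ℝ} (hP : IsKernel P) (hγ : 0 ≤ γ)
    {pi : S → A → ℝ} (hpi : IsPolicy pi) {R : S → A → ℝ} {Rmax : ℝ}
    (hR : ∀ s a, 0 ≤ R s a ∧ R s a ≤ Rmax) (V : S → ℝ) (s : S) :
    |Tpol γ R P pi V s| ≤ Rmax + γ * supNorm V := by
  unfold Tpol
  calc |∑ a, pi s a * (R s a + γ * ∑ s', P s a s' * V s')|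
      ≤ ∑ a, |pi s a * (R s a + γ * ∑ s', P s a s' * V s')| := Finset.abs_sum_le_sum_abs _ _
    _ ≤ ∑ a, pi s a * (Rmax + γ * supNorm V) := by
        refine Finset.sum_le_sum fun a _ => ?_
        rw [abs_mul, abs_of_nonneg (hpi.1 s a)]
        refine mul_le_mul_of_nonneg_left ?_ (hpi.1 s a)
        calc |R s a + γ * ∑ s', P s a s' * V s'|
            ≤ |R s a| + |γ * ∑ s', P s a s' * V s'| := abs_add_le _ _
          _ ≤ Rmax + γ * supNorm V := by
              refine add_le_add ?_ ?_
              · rw [abs_of_nonneg (hR s a).1]; exact (hR s a).2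
              · rw [abs_mul, abs_of_nonneg hγ]
                refine mul_le_mul_of_nonneg_left ?_ hγ
                calc |∑ s', P s a s' * V s'| ≤ ∑ s', |P s a s' * V s'| :=
                      Finset.abs_sum_le_sum_abs _ _
                  _ ≤ ∑ s', P s a s' * supNorm V := by
                      refine Finset.sum_le_sum fun s' _ => ?_
                      rw [abs_mul, abs_of_nonneg (hP.1 s a s')]
                      exact mul_le_mul_of_nonneg_left (abs_le_supNorm _ s') (hP.1 s a s')
                  _ = supNorm V := by rw [← Finset.sum_mul, hP.2, one_mul]
    _ = Rmax + γ * supNorm V := by rw [← Finset.sum_mul, hpi.2, one_mul]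


lemma supNorm_sub_comm (V W : S → ℝ) :
    supNorm (fun s => V s - W s) = supNorm (fun s => W s - V s) := by
  unfold supNorm
  congr 1; ext s; rw [abs_sub_comm]

theorem stmt9 (N : ℕ) (γ Rmax : ℝ) (hγ0 : 0 < γ) (hγ1 : γ < 1)
    (R : S → A → ℝ) (hR : ∀ s a, 0 ≤ R s a ∧ R s a ≤ Rmax)
    (q : Fin N → ℝ) (hq0 : ∀ n, 0 ≤ q n) (hq1 : ∑ n, q n = 1)
    (P : Fin N → S → A → S → ℝ) (hP : ∀ n, IsKernel (P n))
    (Pbar : S → A → S → ℝ) (hPbar : ∀ s a s', Pbar s a s' = ∑ j, q j * P j s a s')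
    (pit : S → A → ℝ) (hpit : IsPolicy pit)
    (Vpi : Fin N → S → ℝ) (hVpi : ∀ n s, Vpi n s = Tpol γ R (P n) pit (Vpi n) s)
    (Vt : Fin N → S → ℝ) (δ : Fin N → ℝ)
    (hδ : ∀ n, supNorm (fun s => Vt n s - Vpi n s) ≤ δ n)
    (hVt : ∀ n, supNorm (Vt n) ≤ Rmax / (1 - γ))
    (pinext : Fin N → S → A → ℝ) (hpinext : ∀ n, IsPolicy (pinext n))
    (ε : Fin N → ℝ)
    (hε : ∀ n, supNorm (fun s => Tpol γ R (P n) (pinext n) (Vt n) s - Topt γ R (P n) (Vt n) s) ≤ ε n)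
    (Vbar : S → ℝ) (hVbar : ∀ s, Vbar s = ∑ n, q n * Vt n s)
    (piagg : S → A → ℝ) (hpiagg : ∀ s a, piagg s a = ∑ n, q n * pinext n s a) :
    supNorm (fun s => Tpol γ R Pbar piagg Vbar s - Topt γ R Pbar Vbar s) ≤
      2 * γ ^ 2 * Rmax * (∑ i, ∑ j, q i * q j * kappa (P i) (P j)) / (1 - γ) ^ 2 +
        γ * Rmax * (∑ n, q n * kappa (P n) Pbar) / (1 - γ) +
        4 * γ * (∑ n, q n * δ n) + ∑ n, q n * ε n := by
  have hγle : (0:ℝ) ≤ γ := hγ0.le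
  have h1γ : (0:ℝ) < 1 - γ := by linarith
  have hPbarK : IsKernel Pbar := by
    constructor
    · intro s a s'; rw [hPbar]
      exact Finset.sum_nonneg fun j _ => mul_nonneg (hq0 j) ((hP j).1 s a s')
    · intro s a
      simp only [hPbar]
      rw [Finset.sum_comm]
      have e : ∀ j : Fin N, (∑ s', q j * P j s a s') = q j := fun j => by
        rw [← Finset.mul_sum, (hP j).2, mul_one]
      simp only [e, hq1]
  have hpiaggP : IsPolicy piagg := by
    constructor
    · intro s a; rw [hpiagg]
      exact Finset.sum_nonneg fun n _ => mul_nonneg (hq0 n) ((hpinext n).1 s a)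
    · intro s
      simp only [hpiagg]
      rw [Finset.sum_comm]
      have e : ∀ n : Fin N, (∑ a, q n * pinext n s a) = q n := fun n => by
        rw [← Finset.mul_sum, (hpinext n).2, mul_one]
      simp only [e, hq1]
  have hκ0 : ∀ (Pm Pn : S → A → S → ℝ), IsKernel Pm → IsKernel Pn → 0 ≤ kappa Pm Pn := by
    intro Pm Pn hm hn
    obtain ⟨s0⟩ := (inferInstance : Nonempty S)
    have hpi0 : IsPolicy (fun (_ : S) (_ : A) => (Fintype.card A : ℝ)⁻¹) := by
      constructor
      · intro _ _; positivity
      · intro _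
        rw [Finset.sum_const, nsmul_eq_mul, Finset.card_univ, mul_inv_cancel₀]
        exact_mod_cast Fintype.card_ne_zero
    refine le_trans ?_ (le_kappa hm hn hpi0 s0)
    exact Finset.sum_nonneg fun s' _ => abs_nonneg _
  have hVpiB : ∀ n, supNorm (Vpi n) ≤ Rmax / (1 - γ) := by
    intro n
    have h : supNorm (Vpi n) ≤ Rmax + γ * supNorm (Vpi n) := by
      refine supNorm_le fun s => ?_
      rw [show |Vpi n s| = |Tpol γ R (P n) pit (Vpi n) s| from by rw [← hVpi n s]]
      exact tpol_abs_le (hP n) hγle hpit hR (Vpi n) s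
    rw [le_div_iff₀ h1γ]
    nlinarith [h]
  have hVpiD : ∀ j n : Fin N, supNorm (fun s => Vpi j s - Vpi n s)
      ≤ γ * Rmax * kappa (P j) (P n) / (1 - γ)^2 := by
    intro j n
    have h : supNorm (fun s => Vpi j s - Vpi n s)
        ≤ γ * kappa (P j) (P n) * (Rmax/(1-γ)) + γ * supNorm (fun s => Vpi j s - Vpi n s) := by
      refine supNorm_le fun s => ?_
      show |Vpi j s - Vpi n s| ≤ _
      have h1 := tpol_kernel_abs (hP j) (hP n) hγle hpit R (Vpi j) s
      have h2 := tpol_lipschitz (hP n) hγle hpit R (Vpi j) (Vpi n) s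
      have habs : |Vpi j s - Vpi n s|
          ≤ γ * kappa (P j) (P n) * supNorm (Vpi j)
            + γ * supNorm (fun s => Vpi j s - Vpi n s) := by
        rw [show Vpi j s - Vpi n s
            = (Tpol γ R (P j) pit (Vpi j) s - Tpol γ R (P n) pit (Vpi j) s)
              + (Tpol γ R (P n) pit (Vpi j) s - Tpol γ R (P n) pit (Vpi n) s) from by
          rw [hVpi j s, hVpi n s]; ring]
        exact le_trans (abs_add_le _ _) (add_le_add h1 h2)
      have hmul : γ * kappa (P j) (P n) * supNorm (Vpi j)
          ≤ γ * kappa (P j) (P n) * (Rmax/(1-γ)) :=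
        mul_le_mul_of_nonneg_left (hVpiB j) (mul_nonneg hγle (hκ0 _ _ (hP j) (hP n)))
      linarith
    have key : (1 - γ) * supNorm (fun s => Vpi j s - Vpi n s)
        ≤ γ * kappa (P j) (P n) * (Rmax/(1-γ)) := by nlinarith [h]
    calc supNorm (fun s => Vpi j s - Vpi n s)
        = ((1 - γ) * supNorm (fun s => Vpi j s - Vpi n s)) / (1 - γ) := by
          field_simp
      _ ≤ (γ * kappa (P j) (P n) * (Rmax/(1-γ))) / (1 - γ) :=
          (div_le_div_iff_of_pos_right h1γ).mpr key
      _ = γ * Rmax * kappa (P j) (P n) / (1 - γ)^2 := by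
          field_simp
  have hVbarB : supNorm Vbar ≤ Rmax / (1 - γ) := by
    refine supNorm_le fun s => ?_
    rw [hVbar s]
    calc |∑ n, q n * Vt n s| ≤ ∑ n, |q n * Vt n s| := Finset.abs_sum_le_sum_abs _ _
      _ ≤ ∑ n, q n * (Rmax/(1-γ)) := by
          refine Finset.sum_le_sum fun n _ => ?_
          rw [abs_mul, abs_of_nonneg (hq0 n)]
          exact mul_le_mul_of_nonneg_left ((abs_le_supNorm (Vt n) s).trans (hVt n)) (hq0 n)
      _ = Rmax/(1-γ) := by rw [← Finset.sum_mul, hq1, one_mul]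
  have hD : ∀ n, supNorm (fun s => Vbar s - Vt n s)
      ≤ (∑ j, q j * δ j) + δ n
        + ∑ j, q j * (γ * Rmax * kappa (P j) (P n) / (1-γ)^2) := by
    intro n
    refine supNorm_le fun s => ?_
    show |Vbar s - Vt n s| ≤ _
    have e : Vbar s - Vt n s = ∑ j, q j * (Vt j s - Vt n s) := by
      have e' : ∑ j, q j * (Vt j s - Vt n s)
          = (∑ j, q j * Vt j s) - (∑ j, q j) * Vt n s := by
        rw [Finset.sum_mul, ← Finset.sum_sub_distrib]
        exact Finset.sum_congr rfl fun j _ => by ring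
      rw [hVbar s, e', hq1, one_mul]
    rw [e]
    calc |∑ j, q j * (Vt j s - Vt n s)| ≤ ∑ j, |q j * (Vt j s - Vt n s)| :=
          Finset.abs_sum_le_sum_abs _ _
      _ ≤ ∑ j, q j * (δ j + δ n + γ * Rmax * kappa (P j) (P n) / (1-γ)^2) := by
          refine Finset.sum_le_sum fun j _ => ?_
          rw [abs_mul, abs_of_nonneg (hq0 j)]
          refine mul_le_mul_of_nonneg_left ?_ (hq0 j)
          have h1a : |Vt j s - Vpi j s| ≤ supNorm (fun s => Vt j s - Vpi j s) := by
            exact abs_le_supNorm (fun s => Vt j s - Vpi j s) s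
          have h2a : |Vt n s - Vpi n s| ≤ supNorm (fun s => Vt n s - Vpi n s) := by
            exact abs_le_supNorm (fun s => Vt n s - Vpi n s) s
          have h3a : |Vpi j s - Vpi n s| ≤ supNorm (fun s => Vpi j s - Vpi n s) := by
            exact abs_le_supNorm (fun s => Vpi j s - Vpi n s) s
          have h1 := h1a.trans (hδ j)
          have h2 := h2a.trans (hδ n)
          have h3 := h3a.trans (hVpiD j n)
          have t1 := abs_sub_le (Vt j s) (Vpi j s) (Vt n s)
          have t2 := abs_sub_le (Vpi j s) (Vpi n s) (Vt n s)
          have h2' : |Vpi n s - Vt n s| ≤ δ n := by rw [abs_sub_comm]; exact h2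
          linarith
      _ = (∑ j, q j * δ j) + δ n
          + ∑ j, q j * (γ * Rmax * kappa (P j) (P n) / (1-γ)^2) := by
          simp only [mul_add, Finset.sum_add_distrib]
          rw [← Finset.sum_mul, hq1, one_mul]
  -- pointwise bound
  refine supNorm_le fun s => ?_
  show |Tpol γ R Pbar piagg Vbar s - Topt γ R Pbar Vbar s| ≤ _
  have hle : Tpol γ R Pbar piagg Vbar s ≤ Topt γ R Pbar Vbar s :=
    tpol_le_topt hpiaggP γ R Pbar Vbar s
  rw [abs_of_nonpos (sub_nonpos.mpr hle), neg_sub]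
  -- step 1
  have step1 : Topt γ R Pbar Vbar s ≤ ∑ n, q n * Topt γ R (P n) Vbar s := by
    unfold Topt
    refine Finset.sup'_le _ _ fun a _ => ?_
    have decomp : R s a + γ * ∑ s', Pbar s a s' * Vbar s'
        = ∑ n, q n * (R s a + γ * ∑ s', P n s a s' * Vbar s') := by
      have e1 : (∑ s', Pbar s a s' * Vbar s')
          = ∑ n, q n * ∑ s', P n s a s' * Vbar s' := by
        simp only [hPbar, Finset.sum_mul]
        rw [Finset.sum_comm]
        congr 1; ext n
        rw [Finset.mul_sum]
        congr 1; ext s'; ring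
      conv_lhs => rw [show R s a = (∑ n, q n) * R s a from by rw [hq1, one_mul]]
      rw [e1, Finset.sum_mul, Finset.mul_sum, ← Finset.sum_add_distrib]
      exact Finset.sum_congr rfl fun n _ => by ring
    rw [decomp]
    refine Finset.sum_le_sum fun n _ => mul_le_mul_of_nonneg_left ?_ (hq0 n)
    exact Finset.le_sup' (fun a => R s a + γ * ∑ s', P n s a s' * Vbar s')
      (Finset.mem_univ a)
  -- step 3
  have step3 : Tpol γ R Pbar piagg Vbar s
      = ∑ n, q n * Tpol γ R Pbar (pinext n) Vbar s := by
    unfold Tpol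
    simp only [hpiagg, Finset.sum_mul]
    rw [Finset.sum_comm]
    congr 1; ext n
    rw [Finset.mul_sum]
    congr 1; ext a; ring
  -- per-client chain
  have hchain : ∀ n, Topt γ R (P n) Vbar s - Tpol γ R Pbar (pinext n) Vbar s
      ≤ γ * kappa (P n) Pbar * (Rmax/(1-γ)) + ε n + 2*γ*((∑ j, q j * δ j) + δ n + ∑ j, q j * (γ * Rmax * kappa (P j) (P n) / (1-γ)^2)) := by
    intro n
    have t1 := topt_lipschitz (hP n) hγle R Vbar (Vt n) s
    have t2 : Topt γ R (P n) (Vt n) s - Tpol γ R (P n) (pinext n) (Vt n) s ≤ ε n := by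
      have hx0 : |Tpol γ R (P n) (pinext n) (Vt n) s - Topt γ R (P n) (Vt n) s|
          ≤ supNorm (fun s => Tpol γ R (P n) (pinext n) (Vt n) s - Topt γ R (P n) (Vt n) s) := by
        exact abs_le_supNorm
          (fun s => Tpol γ R (P n) (pinext n) (Vt n) s - Topt γ R (P n) (Vt n) s) s
      have hx := hx0.trans (hε n)
      have := (abs_le.mp hx).1
      linarith
    have t3 := tpol_lipschitz (hP n) hγle (hpinext n) R (Vt n) Vbar s
    rw [supNorm_sub_comm] at t3
    have t3' := (abs_le.mp t3).2
    have t4 := tpol_kernel_abs (hP n) hPbarK hγle (hpinext n) R Vbar s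
    have t4' := (abs_le.mp t4).2
    have t4'' : γ * kappa (P n) Pbar * supNorm Vbar
        ≤ γ * kappa (P n) Pbar * (Rmax/(1-γ)) :=
      mul_le_mul_of_nonneg_left hVbarB (mul_nonneg hγle (hκ0 _ _ (hP n) hPbarK))
    have t5 : γ * supNorm (fun s => Vbar s - Vt n s) ≤ γ * ((∑ j, q j * δ j) + δ n + ∑ j, q j * (γ * Rmax * kappa (P j) (P n) / (1-γ)^2)) :=
      mul_le_mul_of_nonneg_left (hD n) hγle
    have tele := add_le_add (add_le_add (add_le_add t1 t2) t3') t4'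
    linarith [tele, t4'', t5]
  -- assemble
  have hsum : ∑ n, q n * (Topt γ R (P n) Vbar s - Tpol γ R Pbar (pinext n) Vbar s)
      ≤ ∑ n, q n * (γ * kappa (P n) Pbar * (Rmax/(1-γ)) + ε n + 2*γ*((∑ j, q j * δ j) + δ n + ∑ j, q j * (γ * Rmax * kappa (P j) (P n) / (1-γ)^2))) :=
    Finset.sum_le_sum fun n _ => mul_le_mul_of_nonneg_left (hchain n) (hq0 n)
  have hsplit : ∑ n, q n * (Topt γ R (P n) Vbar s - Tpol γ R Pbar (pinext n) Vbar s)
      = (∑ n, q n * Topt γ R (P n) Vbar s)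
        - ∑ n, q n * Tpol γ R Pbar (pinext n) Vbar s := by
    simp only [mul_sub, Finset.sum_sub_distrib]
  -- final arithmetic
  have eA : (∑ n, q n * (γ * kappa (P n) Pbar * (Rmax/(1-γ))))
      = γ * Rmax * (∑ n, q n * kappa (P n) Pbar) / (1 - γ) := by
    rw [Finset.mul_sum, Finset.sum_div]
    exact Finset.sum_congr rfl fun n _ => by ring
  have e3 : (∑ n, q n * (2*γ*(∑ j, q j * (γ * Rmax * kappa (P j) (P n) / (1-γ)^2))))
      = 2 * γ^2 * Rmax * (∑ i, ∑ j, q i * q j * kappa (P i) (P j)) / (1 - γ)^2 := by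
    simp only [Finset.mul_sum, Finset.sum_div]
    conv_lhs => rw [Finset.sum_comm]
    exact Finset.sum_congr rfl fun j _ => Finset.sum_congr rfl fun n _ => by ring
  have eC : (∑ n, q n * (γ * kappa (P n) Pbar * (Rmax/(1-γ)) + ε n + 2*γ*((∑ j, q j * δ j) + δ n + ∑ j, q j * (γ * Rmax * kappa (P j) (P n) / (1-γ)^2))))
      = 2 * γ^2 * Rmax * (∑ i, ∑ j, q i * q j * kappa (P i) (P j)) / (1 - γ)^2
        + γ * Rmax * (∑ n, q n * kappa (P n) Pbar) / (1 - γ)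
        + 4 * γ * (∑ n, q n * δ n) + ∑ n, q n * ε n := by
    simp only [mul_add, Finset.sum_add_distrib]
    rw [eA]
    have e1 : (∑ n, q n * (2*γ*(∑ j, q j * δ j))) = 2*γ*(∑ j, q j * δ j) := by
      rw [← Finset.sum_mul, hq1, one_mul]
    have e2 : (∑ n, q n * (2*γ*δ n)) = 2*γ*(∑ n, q n * δ n) := by
      rw [Finset.mul_sum]
      exact Finset.sum_congr rfl fun n _ => by ring
    rw [e1, e2, e3]
    ring
  calc Topt γ R Pbar Vbar s - Tpol γ R Pbar piagg Vbar s
      ≤ (∑ n, q n * Topt γ R (P n) Vbar s)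
        - ∑ n, q n * Tpol γ R Pbar (pinext n) Vbar s := by
        rw [step3]; linarith [step1]
    _ = ∑ n, q n * (Topt γ R (P n) Vbar s - Tpol γ R Pbar (pinext n) Vbar s) :=
        hsplit.symm
    _ ≤ ∑ n, q n * (γ * kappa (P n) Pbar * (Rmax/(1-γ)) + ε n + 2*γ*((∑ j, q j * δ j) + δ n + ∑ j, q j * (γ * Rmax * kappa (P j) (P n) / (1-γ)^2))) := hsum
    _ = _ := eC
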